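/- In the coin-tossing game, let E be the event that p_1 > 0 implies x_1 = 1. Then Q̄(E) = 0: for every initial capital K_0 > 0, if Forecaster announces p_1 = K_0/2 and Skeptic announces M_1 = 2, then K_1 = 0 if x_1 = 0 and K_1 = 2 if x_1 = 1; hence no Reality strategy with K_0 > 0 can guarantee both E and sup_n K_n ≤ 1. Nevertheless, Reality can comply with E: the strategy x_1 = 1 if p_1 > 0 (else 0), and for n ≥ 2, x_n = 1 if M_n < 0 and x_n = 0 if M_n ≥ 0, guarantees E and sup_n K_n = max(K_0, K_1) < ∞. -/
import Mathlib


open Filter Finset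

/-- Capital process in the coin-tossing game with initial capital `a`. -/
def cap (a : ℝ) (p M x : ℕ → ℝ) : ℕ → ℝ
  | 0 => a
  | n + 1 => cap a p M x n + M n * (x n - p n)

/-- Forecaster's moves are probabilities in `[0,1]`. -/
def ValidP (p : ℕ → ℝ) : Prop := ∀ n, p n ∈ Set.Icc (0 : ℝ) 1

/-- Reality's moves are in `{0,1}`. -/
def ValidX (x : ℕ → ℝ) : Prop := ∀ n, x n = 0 ∨ x n = 1

/-- A Skeptic strategy reads Forecaster's moves up to round `n` and Reality's
moves before round `n`. -/
def SAdapted (S : (ℕ → ℝ) → (ℕ → ℝ) → ℕ → ℝ) : Prop :=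
  ∀ p p' x x' : ℕ → ℝ, ∀ n, (∀ k ≤ n, p k = p' k) → (∀ k < n, x k = x' k) →
    S p x n = S p' x' n

/-- A Reality strategy reads Forecaster's and Skeptic's moves up to round `n`. -/
def RAdapted (R : (ℕ → ℝ) → (ℕ → ℝ) → ℕ → ℝ) : Prop :=
  ∀ p p' M M' : ℕ → ℝ, ∀ n, (∀ k ≤ n, p k = p' k) → (∀ k ≤ n, M k = M' k) →
    R p M n = R p' M' n

/-- Upper probability of an event `E` (a set of paths `(p, x)`). -/
noncomputable def UpperP (E : (ℕ → ℝ) → (ℕ → ℝ) → Prop) : ℝ :=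
  sInf {a | ∃ S, SAdapted S ∧ ∀ p x, ValidP p → ValidX x →
    (∀ n, 0 ≤ cap a p (S p x) x n) ∧
    (E p x → ∀ ε : ℝ, 0 < ε → ∃ n, 1 - ε < cap a p (S p x) x n)}

/-- Lower probability. -/
noncomputable def LowerP (E : (ℕ → ℝ) → (ℕ → ℝ) → Prop) : ℝ :=
  1 - UpperP (fun p x => ¬ E p x)

/-- The set of initial capitals `a` for which some Reality strategy guarantees
the event and keeps the capital at most 1, against every Forecaster and every
Skeptic keeping the capital nonnegative. -/
def QSet (E : (ℕ → ℝ) → (ℕ → ℝ) → Prop) : Set ℝ :=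
  {a | ∃ R, RAdapted R ∧ ∀ p M : ℕ → ℝ, ValidP p →
    ValidX (R p M) ∧
    ((∀ n, 0 ≤ cap a p M (R p M) n) →
      (E p (R p M) ∧ ∀ n, cap a p M (R p M) n ≤ 1))}

noncomputable def UpperQ (E : (ℕ → ℝ) → (ℕ → ℝ) → Prop) : ℝ := sSup (QSet E)

noncomputable def LowerQ (E : (ℕ → ℝ) → (ℕ → ℝ) → Prop) : ℝ :=
  1 - UpperQ (fun p x => ¬ E p x)

lemma cap_succ (a : ℝ) (p M x : ℕ → ℝ) (n : ℕ) :
    cap a p M x (n+1) = cap a p M x n + M n * (x n - p n) := rfl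

lemma cap_zero (a : ℝ) (p M x : ℕ → ℝ) : cap a p M x 0 = a := rfl

lemma mul_step_nonpos {M pn : ℝ} (h0 : 0 ≤ pn) (h1 : pn ≤ 1) :
    M * ((if M < 0 then (1:ℝ) else 0) - pn) ≤ 0 := by
  split_ifs with h
  · nlinarith
  · push_neg at h; nlinarith

lemma cap_le_aux (a : ℝ) (p M x : ℕ → ℝ) (hp : ValidP p)
    (hx : ∀ n, 1 ≤ n → x n = if M n < 0 then 1 else 0) :
    ∀ n, 1 ≤ n → cap a p M x n ≤ cap a p M x 1 := by
  intro n
  induction n with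
  | zero => intro h; omega
  | succ k ih =>
    intro _
    rcases Nat.lt_or_ge k 1 with hk | hk
    · have : k = 0 := by omega
      subst this; exact le_refl _
    · have h1 := ih hk
      have h2 : cap a p M x (k+1) ≤ cap a p M x k := by
        rw [cap_succ, hx k hk]
        have := mul_step_nonpos (M := M k) (hp k).1 (hp k).2
        linarith
      linarith

/-- Reality strategy witnessing `0 ∈ QSet`. -/
noncomputable def R0 : (ℕ → ℝ) → (ℕ → ℝ) → ℕ → ℝ := fun p M n =>
  if n = 0 then (if 0 < p 0 ∧ M 0 * (1 - p 0) ≤ 1 then 1 else 0)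
  else if M n < 0 then 1 else 0

/-- Reality strategy for complying with the event. -/
noncomputable def R1 : (ℕ → ℝ) → (ℕ → ℝ) → ℕ → ℝ := fun p M n =>
  if n = 0 then (if 0 < p 0 then 1 else 0)
  else if M n < 0 then 1 else 0

lemma R0_adapted : RAdapted R0 := by
  intro p p' M M' n hp hM
  simp only [R0, hp 0 (Nat.zero_le n), hM 0 (Nat.zero_le n), hM n le_rfl]

lemma R1_adapted : RAdapted R1 := by
  intro p p' M M' n hp hM
  simp only [R1, hp 0 (Nat.zero_le n), hM n le_rfl]

lemma R0_validX (p M : ℕ → ℝ) : ValidX (R0 p M) := by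
  intro n; unfold R0; split_ifs <;> simp

lemma R1_validX (p M : ℕ → ℝ) : ValidX (R1 p M) := by
  intro n; unfold R1; split_ifs <;> simp

lemma R0_tail (p M : ℕ → ℝ) : ∀ n, 1 ≤ n → R0 p M n = if M n < 0 then 1 else 0 := by
  intro n hn
  have : n ≠ 0 := by omega
  simp [R0, this]

lemma R1_tail (p M : ℕ → ℝ) : ∀ n, 1 ≤ n → R1 p M n = if M n < 0 then 1 else 0 := by
  intro n hn
  have : n ≠ 0 := by omega
  simp [R1, this]

lemma zero_mem : (0:ℝ) ∈ QSet (fun p x => 0 < p 0 → x 0 = 1) := by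
  refine ⟨R0, R0_adapted, ?_⟩
  intro p M hp
  refine ⟨R0_validX p M, ?_⟩
  intro h
  have hp0l := (hp 0).1
  have hp0r := (hp 0).2
  have hE : 0 < p 0 → R0 p M 0 = 1 := by
    intro hpos
    by_cases hc : M 0 * (1 - p 0) ≤ 1
    · have hcond : 0 < p 0 ∧ M 0 * (1 - p 0) ≤ 1 := ⟨hpos, hc⟩
      simp [R0, hcond]
    · exfalso
      push_neg at hc
      have hnc : ¬ (0 < p 0 ∧ M 0 * (1 - p 0) ≤ 1) := fun hh => absurd hh.2 (not_le.mpr hc)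
      have hx0 : R0 p M 0 = 0 := by simp [R0, hnc]
      have hM0 : 0 < M 0 := by nlinarith
      have hcap1 : cap 0 p M (R0 p M) 1 = -(M 0 * p 0) := by
        rw [cap_succ, hx0, cap_zero]; ring
      have := h 1
      rw [hcap1] at this
      nlinarith
  refine ⟨hE, ?_⟩
  have hcap1 : cap 0 p M (R0 p M) 1 ≤ 1 := by
    rw [cap_succ, cap_zero]
    by_cases hc : 0 < p 0 ∧ M 0 * (1 - p 0) ≤ 1
    · have hx0 : R0 p M 0 = 1 := by simp [R0, hc]
      rw [hx0]; nlinarith [hc.2]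
    · have hx0 : R0 p M 0 = 0 := by simp [R0, hc]
      rw [hx0]
      push_neg at hc
      by_cases hpos : 0 < p 0
      · have := hc hpos
        have hM0 : 0 < M 0 := by nlinarith
        nlinarith
      · have : p 0 = 0 := le_antisymm (not_lt.mp hpos) hp0l
        rw [this]; ring_nf; norm_num
  intro n
  rcases Nat.eq_zero_or_pos n with hn | hn
  · subst hn; rw [cap_zero]; norm_num
  · exact le_trans (cap_le_aux 0 p M (R0 p M) hp (R0_tail p M) n hn) hcap1

lemma qset_le (a : ℝ) (ha : a ∈ QSet (fun p x => 0 < p 0 → x 0 = 1)) : a ≤ 0 := by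
  by_contra hpos
  push_neg at hpos
  obtain ⟨R, hRad, hR⟩ := ha
  by_cases hle : a ≤ 2
  · set p : ℕ → ℝ := fun _ => a / 2 with hpdef
    set M : ℕ → ℝ := fun n => if n = 0 then (2:ℝ) else 0 with hMdef
    have hp : ValidP p := by
      intro n
      constructor
      · show (0:ℝ) ≤ a / 2; linarith
      · show a / 2 ≤ (1:ℝ); linarith
    obtain ⟨hvx, himp⟩ := hR p M hp
    have hM0 : M 0 = 2 := by simp [hMdef]
    have hMk : ∀ k, 1 ≤ k → M k = 0 := by
      intro k hk
      have hk0 : k ≠ 0 := by omega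
      simp [hMdef, hk0]
    have hcap1 : cap a p M (R p M) 1 = 2 * R p M 0 := by
      rw [cap_succ, cap_zero, hM0]
      show a + 2 * (R p M 0 - a / 2) = 2 * R p M 0
      ring
    have hcapk : ∀ n, 1 ≤ n → cap a p M (R p M) n = 2 * R p M 0 := by
      intro n
      induction n with
      | zero => intro h; omega
      | succ k ih =>
        intro _
        rcases Nat.lt_or_ge k 1 with hk | hk
        · have : k = 0 := by omega
          subst this; exact hcap1
        · rw [cap_succ, hMk k hk, ih hk]; ring
    rcases hvx 0 with hx0 | hx0
    · have hnn : ∀ n, 0 ≤ cap a p M (R p M) n := by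
        intro n
        rcases Nat.eq_zero_or_pos n with hn | hn
        · subst hn; rw [cap_zero]; linarith
        · rw [hcapk n hn, hx0]; norm_num
      have hEv := (himp hnn).1
      have : R p M 0 = 1 := hEv (by show (0:ℝ) < a / 2; linarith)
      rw [this] at hx0; norm_num at hx0
    · have hnn : ∀ n, 0 ≤ cap a p M (R p M) n := by
        intro n
        rcases Nat.eq_zero_or_pos n with hn | hn
        · subst hn; rw [cap_zero]; linarith
        · rw [hcapk n hn, hx0]; norm_num
      have := (himp hnn).2 1
      rw [hcap1, hx0] at this
      norm_num at this
  · push_neg at hle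
    set p : ℕ → ℝ := fun _ => 0 with hpdef
    set M : ℕ → ℝ := fun _ => 0 with hMdef
    have hp : ValidP p := by intro n; exact ⟨le_refl _, by norm_num⟩
    obtain ⟨hvx, himp⟩ := hR p M hp
    have hcapk : ∀ n, cap a p M (R p M) n = a := by
      intro n
      induction n with
      | zero => rfl
      | succ k ih => rw [cap_succ, ih]; show a + 0 * _ = a; ring
    have hnn : ∀ n, 0 ≤ cap a p M (R p M) n := by
      intro n; rw [hcapk]; linarith
    have := (himp hnn).2 0
    rw [hcapk] at this
    linarith

/-- In the coin-tossing game, for the event `E` that `p 1 > 0 → x 1 = 1`: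
`Q̄(E) = 0`; concretely, against `p 1 = K 0 / 2` and `M 1 = 2` the capital
after round 1 equals `2 * x 1` (so `0` if `x 1 = 0` and `2` if `x 1 = 1`).
Nevertheless Reality can comply with `E`: some adapted strategy guarantees `E`
and a bounded capital whenever Skeptic keeps the capital nonnegative. -/
theorem stmt_18 :
    UpperQ (fun p x => 0 < p 0 → x 0 = 1) = 0 ∧
    (∀ a : ℝ, ∀ x : ℕ → ℝ,
      cap a (fun _ => a / 2) (fun _ => (2 : ℝ)) x 1 = 2 * x 0) ∧
    (∃ R, RAdapted R ∧ ∀ p M : ℕ → ℝ, ValidP p →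
      ValidX (R p M) ∧
      ((∀ n, 0 ≤ cap 1 p M (R p M) n) →
        ((0 < p 0 → R p M 0 = 1) ∧
          ∃ C : ℝ, ∀ n, cap 1 p M (R p M) n ≤ C))) := by
  refine ⟨?_, ?_, ?_⟩
  · exact le_antisymm (csSup_le ⟨0, zero_mem⟩ qset_le) (le_csSup ⟨0, qset_le⟩ zero_mem)
  · intro a x
    rw [cap_succ, cap_zero]
    show a + 2 * (x 0 - a / 2) = 2 * x 0
    ring
  · refine ⟨R1, R1_adapted, ?_⟩
    intro p M hp
    refine ⟨R1_validX p M, ?_⟩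
    intro _
    constructor
    · intro hpos
      simp [R1, hpos]
    · refine ⟨max 1 (cap 1 p M (R1 p M) 1), ?_⟩
      intro n
      rcases Nat.eq_zero_or_pos n with hn | hn
      · subst hn; rw [cap_zero]; exact le_max_left _ _
      · exact le_trans (cap_le_aux 1 p M (R1 p M) hp (R1_tail p M) n hn) (le_max_right _ _)
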